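/- The set {Sq^I(w_k) : I admissible with excess e(I) ≤ k} is linearly independent over Z/2 in the ideal (w_k) ⊂ Z/2[w_1, …, w_k] = H^*(BO(k); Z/2). -/

import Mathlib

/-!
STATEMENT 13 (Peterson–Wu): the set `{Sq^I(w_k) : I admissible with excess e(I) ≤ k}` is linearly
independent over `ℤ/2` in the ideal `(w_k) ⊆ ℤ/2[w₁, …, w_k] = H^*(BO(k); ℤ/2)`.

We model `H^*(BO(k); ℤ/2)` as `MvPolynomial (Fin k) (ZMod 2)` with `w_i = X ⟨i-1⟩` (and `w_0 = 1`,
`w_i = 0` for `i > k`).  The mod 2 Steenrod squares are axiomatized as linear operations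
satisfying `Sq⁰ = id`, the Cartan formula, the Wu formula
`Sq^i(w_j) = ∑_{t=0}^{i} C(j+t-i-1, t) w_{i-t} w_{j+t}` (for `i ≤ j ≤ k`) and the instability
condition `Sq^i(w_j) = 0` for `i > j`, which together determine the action on `ℤ/2[w₁,…,w_k]`.
Admissible sequences `I = (i₁,…,i_r)` with `e(I) ≤ k` are encoded as lists of positive integers
with `i_s ≥ 2 i_{s+1}` and `i₁ ≤ k + (i₂ + ⋯ + i_r)`, and `Sq^I(w_k)` is the iterated application
`Sq^{i₁}(⋯(Sq^{i_r}(w_k))⋯)`.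
-/

namespace PW

open Finset

variable {k : ℕ}

/-- number of variables with multiplicity -/
def cnt (f : Fin k →₀ ℕ) : ℕ := ∑ q : Fin k, f q

/-- weighted degree, `w_{j+1}` has degree `j+1` -/
def wdeg (f : Fin k →₀ ℕ) : ℕ := ∑ q : Fin k, ((q : ℕ) + 1) * f q

/-- the order: fewer variables = smaller; tie broken by: more at the topmost
difference = smaller -/
def ltF (f g : Fin k →₀ ℕ) : Prop :=
  cnt f < cnt g ∨ (cnt f = cnt g ∧ ∃ q : Fin k, g q < f q ∧ ∀ r : Fin k, q < r → f r = g r)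

lemma cnt_add (f g : Fin k →₀ ℕ) : cnt (f + g) = cnt f + cnt g := by
  simp [cnt, Finset.sum_add_distrib]

lemma cnt_smul (n : ℕ) (f : Fin k →₀ ℕ) : cnt (n • f) = n * cnt f := by
  simp [cnt, Finset.mul_sum]

lemma cnt_single (q : Fin k) (n : ℕ) : cnt (Finsupp.single q n) = n := by
  classical
  simp [cnt, Finsupp.single_apply]

lemma wdeg_add (f g : Fin k →₀ ℕ) : wdeg (f + g) = wdeg f + wdeg g := by
  simp [wdeg, mul_add, Finset.sum_add_distrib]

lemma wdeg_single (q : Fin k) (n : ℕ) : wdeg (Finsupp.single q n) = ((q : ℕ) + 1) * n := by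
  classical
  rw [wdeg, Finset.sum_eq_single q]
  · simp
  · intro b _ hb; simp [Finsupp.single_apply, Ne.symm hb]
  · simp

lemma wdeg_zero : wdeg (0 : Fin k →₀ ℕ) = 0 := by simp [wdeg]

lemma cnt_zero : cnt (0 : Fin k →₀ ℕ) = 0 := by simp [cnt]

lemma ltF_irrefl (f : Fin k →₀ ℕ) : ¬ ltF f f := by
  rintro (h | ⟨-, q, hq, -⟩)
  · omega
  · omega

lemma ltF_trans {f g h : Fin k →₀ ℕ} (h1 : ltF f g) (h2 : ltF g h) : ltF f h := by
  rcases h1 with h1 | ⟨hc1, q1, hq1, ha1⟩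
  · rcases h2 with h2 | ⟨hc2, -⟩
    · exact Or.inl (h1.trans h2)
    · exact Or.inl (hc2 ▸ h1)
  · rcases h2 with h2 | ⟨hc2, q2, hq2, ha2⟩
    · exact Or.inl (hc1 ▸ h2)
    · refine Or.inr ⟨hc1.trans hc2, ?_⟩
      rcases lt_trichotomy q1 q2 with hlt | rfl | hlt
      · exact ⟨q2, by rw [ha1 q2 hlt]; exact hq2, fun r hr => (ha1 r (hlt.trans hr)).trans (ha2 r hr)⟩
      · exact ⟨q1, hq2.trans hq1, fun r hr => (ha1 r hr).trans (ha2 r hr)⟩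
      · exact ⟨q1, by rw [← ha2 q1 hlt]; exact hq1, fun r hr => (ha1 r hr).trans (ha2 r (hlt.trans hr))⟩

lemma ltF_total {f g : Fin k →₀ ℕ} (hne : f ≠ g) : ltF f g ∨ ltF g f := by
  rcases lt_trichotomy (cnt f) (cnt g) with h | h | h
  · exact Or.inl (Or.inl h)
  · -- equal counts: find topmost difference
    have hne' : ∃ q : Fin k, f q ≠ g q := by
      by_contra hq
      push_neg at hq
      exact hne (Finsupp.ext hq)
    classical
    obtain ⟨q0, hq0⟩ := hne'
    set s : Finset (Fin k) := Finset.univ.filter (fun q => f q ≠ g q) with hs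
    have hq0s : q0 ∈ s := by simp [hs, hq0]
    have hsne : s.Nonempty := ⟨q0, hq0s⟩
    set q := s.max' hsne with hqdef
    have hqs : q ∈ s := s.max'_mem hsne
    have hqne : f q ≠ g q := by simpa [hs] using hqs
    have hab : ∀ r : Fin k, q < r → f r = g r := by
      intro r hr
      by_contra hcon
      exact absurd (s.le_max' r (by simp [hs, hcon])) (not_le.mpr hr)
    rcases lt_or_gt_of_ne hqne with hlt | hlt
    · exact Or.inr (Or.inr ⟨h.symm, q, hlt, fun r hr => (hab r hr).symm⟩)
    · exact Or.inl (Or.inr ⟨h, q, hlt, hab⟩)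
  · exact Or.inr (Or.inl h)

lemma ltF_cnt_le {f g : Fin k →₀ ℕ} (h : ltF f g) : cnt f ≤ cnt g := by
  rcases h with h | ⟨h, -⟩ <;> omega

lemma ltF_add_left {f g : Fin k →₀ ℕ} (h : ltF f g) (d : Fin k →₀ ℕ) : ltF (d + f) (d + g) := by
  rcases h with h | ⟨hc, q, hq, ha⟩
  · exact Or.inl (by rw [cnt_add, cnt_add]; omega)
  · refine Or.inr ⟨by rw [cnt_add, cnt_add, hc], q, ?_, fun r hr => ?_⟩
    · simpa using hq
    · simpa using ha r hr

lemma ltF_double {f g : Fin k →₀ ℕ} (h : ltF f g) : ltF (2 • f) (2 • g) := by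
  have h1 : ltF (f + f) (f + g) := ltF_add_left h f
  have h2 : ltF (g + f) (g + g) := ltF_add_left h g
  rw [add_comm g f] at h2
  have := ltF_trans h1 h2
  simpa [two_smul] using this

/-- max of a finite set w.r.t. ltF on keys -/
lemma exists_max {ι : Type*} (s : Finset ι) (hs : s.Nonempty) (key : ι → (Fin k →₀ ℕ)) :
    ∃ i ∈ s, ∀ j ∈ s, ¬ ltF (key i) (key j) := by
  classical
  induction s using Finset.induction_on with
  | empty => exact absurd hs (by simp)
  | @insert a t ha ih =>
    rcases t.eq_empty_or_nonempty with rfl | htne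
    · exact ⟨a, by simp, by intro j hj; simp at hj; subst hj; exact ltF_irrefl _⟩
    · obtain ⟨m, hm, hmax⟩ := ih htne
      by_cases hma : ltF (key m) (key a)
      · refine ⟨a, by simp, ?_⟩
        intro j hj
        rcases Finset.mem_insert.mp hj with rfl | hj
        · exact ltF_irrefl _
        · intro hcon
          exact hmax j hj (ltF_trans hma hcon)
      · refine ⟨m, by simp [hm], ?_⟩
        intro j hj
        rcases Finset.mem_insert.mp hj with rfl | hj
        · exact hma
        · exact hmax j hj

/-! ### Admissible lists -/

/-- admissibility conditions from the theorem statement -/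
def Adm (k : ℕ) (l : List ℕ) : Prop :=
  (∀ x ∈ l, 0 < x) ∧ l.Chain' (fun a b => 2 * b ≤ a) ∧ l.headI ≤ k + l.tail.sum

/-- the excess -/
def exc (l : List ℕ) : ℕ := l.headI - l.tail.sum

lemma Adm.tail {l : List ℕ} (h : Adm k l) : Adm k l.tail := by
  obtain ⟨h1, h2, h3⟩ := h
  refine ⟨fun x hx => h1 x (List.mem_of_mem_tail hx), h2.tail, ?_⟩
  match l with
  | [] => simp
  | [a] => simp
  | a :: b :: l =>
    simp only [List.tail_cons, List.headI_cons, List.sum_cons] at *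
    have hab : 2 * b ≤ a := (List.isChain_cons_cons.mp h2).1
    omega

lemma Adm.sum_le {l : List ℕ} (h : Adm k l) : l.sum ≤ 2 * l.headI := by
  induction l with
  | nil => simp
  | cons a l ih =>
    have ht := h.tail
    simp only [List.tail_cons] at ht
    have hs := ih ht
    simp only [List.sum_cons, List.headI_cons]
    match l, h, hs with
    | [], _, _ => simp; omega
    | b :: l, h, hs =>
      have hab : 2 * b ≤ a := (List.isChain_cons_cons.mp h.2.1).1
      simp only [List.headI_cons] at hs
      omega

lemma Adm.tail_sum_le {l : List ℕ} (h : Adm k l) : l.tail.sum ≤ l.headI := by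
  match l with
  | [] => simp
  | a :: l =>
    have := h.tail.sum_le
    simp only [List.tail_cons, List.headI_cons] at *
    match l, h, this with
    | [], _, _ => simp
    | b :: l, h, hs =>
      have hab : 2 * b ≤ a := (List.isChain_cons_cons.mp h.2.1).1
      simp only [List.headI_cons] at hs
      omega

lemma Adm.exc_le (h : Adm k l) : exc l ≤ k := by
  obtain ⟨-, -, h3⟩ := h
  unfold exc
  omega

lemma Adm.one_le_exc {l : List ℕ} (h : Adm k l) (hne : l ≠ []) : 1 ≤ exc l := by
  induction l with
  | nil => exact absurd rfl hne
  | cons a l ih =>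
    match l with
    | [] =>
      have := h.1 a (by simp)
      simp [exc]; omega
    | b :: l =>
      have hab : 2 * b ≤ a := (List.isChain_cons_cons.mp h.2.1).1
      have ht := h.tail
      simp only [List.tail_cons] at ht
      have := ih ht (by simp)
      have hsum : (b :: l).sum ≤ 2 * b := ht.sum_le
      simp only [exc, List.headI_cons, List.tail_cons, List.sum_cons] at *
      omega

lemma Adm.exc_tail_le {l : List ℕ} (h : Adm k l) : exc l.tail ≤ exc l := by
  match l with
  | [] => simp
  | [a] => simp [exc]
  | a :: b :: l =>
    have hab : 2 * b ≤ a := (List.isChain_cons_cons.mp h.2.1).1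
    have ht := h.tail
    simp only [List.tail_cons] at ht
    have hsum : (b :: l).sum ≤ 2 * b := ht.sum_le
    simp only [exc, List.tail_cons, List.headI_cons, List.sum_cons] at *
    omega

/-! ### The leading monomial -/

/-- index of `w_e` as a variable, junk if `e = 0` or `e > k` -/
def idx (hk : 0 < k) (e : ℕ) : Fin k := ⟨(e - 1) % k, Nat.mod_lt _ hk⟩

lemma idx_val (hk : 0 < k) {e : ℕ} (h1 : 1 ≤ e) (h2 : e ≤ k) : ((idx hk e : Fin k) : ℕ) = e - 1 := by
  simp only [idx]
  exact Nat.mod_eq_of_lt (by omega)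

lemma idx_inj (hk : 0 < k) {e e' : ℕ} (h1 : 1 ≤ e) (h2 : e ≤ k) (h1' : 1 ≤ e') (h2' : e' ≤ k)
    (h : idx hk e = idx hk e') : e = e' := by
  have := congrArg Fin.val h
  rw [idx_val hk h1 h2, idx_val hk h1' h2'] at this
  omega

/-- the leading monomial of `x_I` -/
noncomputable def MI (hk : 0 < k) : List ℕ → (Fin k →₀ ℕ)
  | [] => 0
  | i :: l => Finsupp.single (idx hk (i - l.sum)) 1 + 2 • MI hk l

@[simp] lemma MI_nil (hk : 0 < k) : MI hk [] = 0 := rfl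

@[simp] lemma MI_cons (hk : 0 < k) (i : ℕ) (l : List ℕ) :
    MI hk (i :: l) = Finsupp.single (idx hk (i - l.sum)) 1 + 2 • MI hk l := rfl

lemma MI_small (hk : 0 < k) {l : List ℕ} (h : Adm k l) :
    ∀ q : Fin k, MI hk l q ≠ 0 → (q : ℕ) + 1 ≤ exc l := by
  induction l with
  | nil => simp
  | cons i l ih =>
    intro q hq
    have ht := h.tail
    simp only [List.tail_cons] at ht
    have he1 : 1 ≤ i - l.sum := h.one_le_exc (by simp)
    have hek : i - l.sum ≤ k := h.exc_le
    have hexc : exc (i :: l) = i - l.sum := by simp [exc]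
    rw [hexc]
    rw [MI_cons] at hq
    simp only [Finsupp.add_apply, Finsupp.smul_apply, Finsupp.single_apply, smul_eq_mul] at hq
    by_cases hqe : idx hk (i - l.sum) = q
    · subst hqe
      rw [idx_val hk he1 hek]
      omega
    · rw [if_neg hqe] at hq
      have h2 : MI hk l q ≠ 0 := by omega
      have := ih ht q h2
      have h3 : exc l ≤ exc (i :: l) := by
        have := h.exc_tail_le
        simpa using this
      rw [hexc] at h3
      omega

lemma MI_parity (hk : 0 < k) (i : ℕ) (l : List ℕ) (q : Fin k) :
    MI hk (i :: l) q % 2 = if q = idx hk (i - l.sum) then 1 else 0 := by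
  rw [MI_cons]
  simp only [Finsupp.add_apply, Finsupp.smul_apply, Finsupp.single_apply, smul_eq_mul]
  by_cases h : idx hk (i - l.sum) = q
  · rw [if_pos h, if_pos h.symm]
    omega
  · rw [if_neg h, if_neg (fun hq => h hq.symm)]
    omega

lemma MI_inj (hk : 0 < k) : ∀ {l l' : List ℕ}, Adm k l → Adm k l' →
    MI hk l = MI hk l' → l = l' := by
  intro l
  induction l with
  | nil =>
    intro l' _ h' heq
    match l' with
    | [] => rfl
    | i :: l' =>
      exfalso
      have h2 := MI_parity hk i l' (idx hk (i - l'.sum))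
      rw [if_pos rfl, ← heq] at h2
      rw [MI_nil] at h2
      simp at h2
  | cons i l ih =>
    intro l' h h' heq
    match l' with
    | [] =>
      exfalso
      have h2 := MI_parity hk i l (idx hk (i - l.sum))
      rw [if_pos rfl, heq] at h2
      rw [MI_nil] at h2
      simp at h2
    | i' :: l'' =>
      have he1 : 1 ≤ i - l.sum := h.one_le_exc (by simp)
      have hek : i - l.sum ≤ k := h.exc_le
      have he1' : 1 ≤ i' - l''.sum := h'.one_le_exc (by simp)
      have hek' : i' - l''.sum ≤ k := h'.exc_le
      have hidx : idx hk (i - l.sum) = idx hk (i' - l''.sum) := by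
        by_contra hcon
        have h1 := MI_parity hk i l (idx hk (i - l.sum))
        have h2 := MI_parity hk i' l'' (idx hk (i - l.sum))
        rw [if_pos rfl] at h1
        rw [if_neg hcon] at h2
        rw [heq] at h1
        omega
      have hee : i - l.sum = i' - l''.sum := idx_inj hk he1 hek he1' hek' hidx
      have htails : MI hk l = MI hk l'' := by
        ext q
        have hq := DFunLike.congr_fun heq q
        rw [MI_cons, MI_cons, hee] at hq
        simp only [Finsupp.add_apply, Finsupp.smul_apply, smul_eq_mul] at hq
        omega
      have ht := h.tail
      have ht' := h'.tail
      simp only [List.tail_cons] at ht ht'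
      have hl : l = l'' := ih ht ht' htails
      subst hl
      have hsl : l.sum ≤ i := by simpa using h.tail_sum_le
      have hsl' : l.sum ≤ i' := by simpa using h'.tail_sum_le
      have : i = i' := by omega
      rw [this]



open MvPolynomial

variable {k : ℕ}

/-- bundle of the hypotheses on `Sq` and `w` -/
structure Good (k : ℕ)
    (Sq : ℕ → MvPolynomial (Fin k) (ZMod 2) →ₗ[ZMod 2] MvPolynomial (Fin k) (ZMod 2))
    (w : ℕ → MvPolynomial (Fin k) (ZMod 2)) : Prop where
  hw0 : w 0 = 1
  hwX : ∀ i : Fin k, w ((i : ℕ) + 1) = MvPolynomial.X i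
  hwTop : ∀ i, k < i → w i = 0
  hSq0 : ∀ x, Sq 0 x = x
  hSqOne : ∀ n, 0 < n → Sq n 1 = 0
  hCartan : ∀ n x y, Sq n (x * y) = ∑ i ∈ Finset.range (n + 1), Sq i x * Sq (n - i) y
  hWu : ∀ i j, i ≤ j → j ≤ k → Sq i (w j) =
      ∑ t ∈ Finset.range (i + 1),
        (Nat.choose (j + t - i - 1) t : ZMod 2) • (w (i - t) * w (j + t))
  hInst : ∀ i j, j < i → j ≤ k → Sq i (w j) = 0

variable {Sq : ℕ → MvPolynomial (Fin k) (ZMod 2) →ₗ[ZMod 2] MvPolynomial (Fin k) (ZMod 2)}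
variable {w : ℕ → MvPolynomial (Fin k) (ZMod 2)}

lemma Good.w_eq (H : Good k Sq w) {m : ℕ} (h1 : 1 ≤ m) (h2 : m ≤ k) :
    w m = X (⟨m - 1, by omega⟩ : Fin k) := by
  have h := H.hwX ⟨m - 1, by omega⟩
  simpa [show m - 1 + 1 = m by omega] using h

lemma Good.wsupp (H : Good k Sq w) (m : ℕ) :
    ∀ g ∈ (w m).support, wdeg g = m ∧ cnt g ≤ 1 := by
  intro g hg
  rcases Nat.eq_zero_or_pos m with rfl | h1
  · rw [H.hw0] at hg
    rw [mem_support_iff, coeff_one] at hg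
    have : g = 0 := by
      by_contra hcon
      simp [Ne.symm hcon] at hg
    subst this
    simp [wdeg_zero, cnt_zero]
  · by_cases h2 : m ≤ k
    · rw [H.w_eq h1 h2, support_X] at hg
      simp only [Finset.mem_singleton] at hg
      subst hg
      constructor
      · rw [wdeg_single]; simp; omega
      · rw [cnt_single]
    · rw [H.hwTop m (by omega)] at hg
      simp at hg

lemma Good.wsupp_single (H : Good k Sq w) {m : ℕ} (h1 : 1 ≤ m) :
    ∀ g ∈ (w m).support, ∃ hq : m - 1 < k, g = Finsupp.single (⟨m - 1, hq⟩ : Fin k) 1 := by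
  intro g hg
  by_cases h2 : m ≤ k
  · rw [H.w_eq h1 h2, support_X] at hg
    simp only [Finset.mem_singleton] at hg
    exact ⟨by omega, hg⟩
  · rw [H.hwTop m (by omega)] at hg
    simp at hg

lemma Good.sqX_zero (H : Good k Sq w) (j : Fin k) {a : ℕ} (ha : (j : ℕ) + 1 < a) :
    Sq a (X j) = 0 := by
  rw [← H.hwX j]
  exact H.hInst a ((j : ℕ) + 1) ha (by omega)

lemma Good.sqX_support (H : Good k Sq w) (j : Fin k) (a : ℕ) :
    ∀ g ∈ (Sq a (X j)).support, wdeg g = ((j : ℕ) + 1) + a ∧ cnt g ≤ 2 := by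
  classical
  intro g hg
  by_cases ha : (j : ℕ) + 1 < a
  · rw [H.sqX_zero j ha] at hg
    simp at hg
  · rw [← H.hwX j, H.hWu a ((j : ℕ) + 1) (by omega) (by omega)] at hg
    have hg2 := MvPolynomial.support_sum hg
    rw [Finset.mem_biUnion] at hg2
    obtain ⟨t, ht, hgt⟩ := hg2
    rw [Finset.mem_range] at ht
    have hgt2 := MvPolynomial.support_smul hgt
    have hgt3 := MvPolynomial.support_mul _ _ hgt2
    rw [Finset.mem_add] at hgt3
    obtain ⟨g1, hg1, g2, hg2', rfl⟩ := hgt3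
    obtain ⟨hw1, hc1⟩ := H.wsupp _ g1 hg1
    obtain ⟨hw2, hc2⟩ := H.wsupp _ g2 hg2'
    constructor
    · rw [wdeg_add, hw1, hw2]; omega
    · rw [cnt_add]; omega

lemma Good.sqX_top (H : Good k Sq w) (j : Fin k) :
    Sq ((j : ℕ) + 1) (X j) = X j * X j := by
  rw [← H.hwX j, H.hWu ((j : ℕ) + 1) ((j : ℕ) + 1) le_rfl (by omega)]
  rw [Finset.sum_eq_single_of_mem 0 (by simp)]
  · simp [Nat.choose_zero_right]
  · intro t ht htne
    have h0 : ((j : ℕ) + 1) + t - ((j : ℕ) + 1) - 1 = t - 1 := by omega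
    rw [h0, Nat.choose_eq_zero_of_lt (by omega)]
    simp

/-- `monomial f 1` decomposition helper -/
lemma monomial_split {f : Fin k →₀ ℕ} {j : Fin k} (hj : f j ≠ 0) :
    f = Finsupp.single j 1 + (f - Finsupp.single j 1) := by
  ext q
  classical
  simp only [Finsupp.add_apply, Finsupp.tsub_apply, Finsupp.single_apply]
  by_cases h : j = q
  · subst h; simp; omega
  · simp [h]

lemma cnt_eq_zero {f : Fin k →₀ ℕ} (h : cnt f = 0) : f = 0 := by
  classical
  rw [cnt, Finset.sum_eq_zero_iff] at h
  ext q
  simpa using h q (Finset.mem_univ q)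

lemma Good.sq_monomial_zero (H : Good k Sq w) :
    (∀ n, wdeg (0 : Fin k →₀ ℕ) < n → Sq n (monomial (0 : Fin k →₀ ℕ) 1) = 0) ∧
    (Sq (wdeg (0 : Fin k →₀ ℕ)) (monomial (0 : Fin k →₀ ℕ) 1)
      = monomial (2 • (0 : Fin k →₀ ℕ)) 1) ∧
    (∀ n, ∀ g ∈ (Sq n (monomial (0 : Fin k →₀ ℕ) 1)).support,
      wdeg g = wdeg (0 : Fin k →₀ ℕ) + n ∧ cnt g ≤ 2 * cnt (0 : Fin k →₀ ℕ)) := by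
  have hm1 : (monomial (0 : Fin k →₀ ℕ) (1 : ZMod 2)) = 1 := by
    simp [monomial_zero']
  refine ⟨?_, ?_, ?_⟩
  · intro n hn
    rw [wdeg_zero] at hn
    rw [hm1]
    exact H.hSqOne n hn
  · rw [hm1, wdeg_zero, H.hSq0, smul_zero, hm1]
  · intro n g hg
    rcases Nat.eq_zero_or_pos n with rfl | hn
    · rw [hm1, H.hSq0] at hg
      rw [mem_support_iff, coeff_one] at hg
      have : g = 0 := by
        by_contra hcon
        simp [Ne.symm hcon] at hg
      subst this
      simp [wdeg_zero, cnt_zero]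
    · rw [hm1, H.hSqOne n hn] at hg
      simp at hg

lemma Good.sq_monomial (H : Good k Sq w) :
    ∀ N (f : Fin k →₀ ℕ), cnt f ≤ N →
    (∀ n, wdeg f < n → Sq n (monomial f 1) = 0) ∧
    (Sq (wdeg f) (monomial f 1) = monomial (2 • f) 1) ∧
    (∀ n, ∀ g ∈ (Sq n (monomial f 1)).support,
      wdeg g = wdeg f + n ∧ cnt g ≤ 2 * cnt f) := by
  classical
  intro N
  induction N with
  | zero =>
    intro f hf
    have : f = 0 := cnt_eq_zero (by omega)
    subst this
    exact H.sq_monomial_zero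
  | succ N ih =>
    intro f hf
    by_cases hf0 : f = 0
    · subst hf0; exact H.sq_monomial_zero
    · -- pick a variable j in the support
      obtain ⟨j, hj⟩ : ∃ j, f j ≠ 0 := by
        by_contra hcon
        push_neg at hcon
        exact hf0 (Finsupp.ext hcon)
      set f' : Fin k →₀ ℕ := f - Finsupp.single j 1 with hf'def
      have hsplit : f = Finsupp.single j 1 + f' := monomial_split hj
      have hcnt : cnt f = cnt f' + 1 := by
        rw [hsplit, cnt_add, cnt_single]; omega
      have hcntf' : cnt f' ≤ N := by omega
      have hwdeg : wdeg f = ((j : ℕ) + 1) + wdeg f' := by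
        rw [hsplit, wdeg_add, wdeg_single]; omega
      have hmono : monomial f (1 : ZMod 2) = X j * monomial f' 1 := by
        rw [hsplit, monomial_single_add, pow_one]
      obtain ⟨ih1, ih2, ih3⟩ := ih f' hcntf'
      have hcart : ∀ n, Sq n (monomial f (1 : ZMod 2)) =
          ∑ a ∈ Finset.range (n + 1), Sq a (X j) * Sq (n - a) (monomial f' 1) := by
        intro n
        rw [hmono, H.hCartan]
      refine ⟨?_, ?_, ?_⟩
      · -- instability
        intro n hn
        rw [hcart n]
        apply Finset.sum_eq_zero
        intro a ha
        rw [Finset.mem_range] at ha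
        by_cases haj : (j : ℕ) + 1 < a
        · rw [H.sqX_zero j haj, zero_mul]
        · rw [ih1 (n - a) (by omega), mul_zero]
      · -- top squaring
        rw [hcart (wdeg f)]
        rw [Finset.sum_eq_single_of_mem ((j : ℕ) + 1) (by rw [Finset.mem_range]; omega)]
        · have hrest : wdeg f - ((j : ℕ) + 1) = wdeg f' := by omega
          rw [hrest, H.sqX_top j, ih2]
          have h2f : 2 • f = Finsupp.single j 2 + 2 • f' := by
            rw [hsplit, smul_add, Finsupp.smul_single]
            norm_num
          rw [h2f, monomial_single_add]
          ring
        · intro a ha hane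
          rw [Finset.mem_range] at ha
          by_cases haj : (j : ℕ) + 1 < a
          · rw [H.sqX_zero j haj, zero_mul]
          · rw [ih1 (wdeg f - a) (by omega), mul_zero]
      · -- support bound
        intro n g hg
        rw [hcart n] at hg
        have hg2 := MvPolynomial.support_sum hg
        rw [Finset.mem_biUnion] at hg2
        obtain ⟨a, ha, hga⟩ := hg2
        rw [Finset.mem_range] at ha
        have hga2 := MvPolynomial.support_mul _ _ hga
        rw [Finset.mem_add] at hga2
        obtain ⟨g1, hg1, g2, hg2', rfl⟩ := hga2
        obtain ⟨hw1, hc1⟩ := H.sqX_support j a g1 hg1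
        obtain ⟨hw2, hc2⟩ := ih3 (n - a) g2 hg2'
        constructor
        · rw [wdeg_add, hw1, hw2]; omega
        · rw [cnt_add]; omega

/-- homogeneity of supports -/
def Hom (x : MvPolynomial (Fin k) (ZMod 2)) (d : ℕ) : Prop :=
  ∀ g ∈ x.support, wdeg g = d

lemma Good.sq_hom_zero (H : Good k Sq w) {x : MvPolynomial (Fin k) (ZMod 2)} {d : ℕ}
    (hx : Hom x d) {n : ℕ} (hdn : d < n) : Sq n x = 0 := by
  conv_lhs => rw [as_sum x]
  rw [map_sum]
  apply Finset.sum_eq_zero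
  intro v hv
  have : monomial v (coeff v x) = (coeff v x) • monomial v 1 := by
    rw [smul_monomial, smul_eq_mul, mul_one]
  rw [this, map_smul, ((H.sq_monomial (cnt v) v le_rfl).1 n (by rw [hx v hv]; exact hdn)),
    smul_zero]

lemma Good.sq_hom_top (H : Good k Sq w) {x : MvPolynomial (Fin k) (ZMod 2)} {d : ℕ}
    (hx : Hom x d) : Sq d x = ∑ v ∈ x.support, monomial (2 • v) (coeff v x) := by
  conv_lhs => rw [as_sum x]
  rw [map_sum]
  apply Finset.sum_congr rfl
  intro v hv
  have h1 : monomial v (coeff v x) = (coeff v x) • monomial v 1 := by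
    rw [smul_monomial, smul_eq_mul, mul_one]
  have h2 : d = wdeg v := (hx v hv).symm
  rw [h1, map_smul, h2, (H.sq_monomial (cnt v) v le_rfl).2.1, smul_monomial, smul_eq_mul,
    mul_one]

lemma Good.sq_hom_support (H : Good k Sq w) {x : MvPolynomial (Fin k) (ZMod 2)} {d : ℕ}
    (hx : Hom x d) (n : ℕ) :
    ∀ g ∈ (Sq n x).support, wdeg g = d + n ∧ ∃ f ∈ x.support, cnt g ≤ 2 * cnt f := by
  classical
  intro g hg
  conv at hg => rw [as_sum x]
  rw [map_sum] at hg
  have hg2 := MvPolynomial.support_sum hg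
  rw [Finset.mem_biUnion] at hg2
  obtain ⟨v, hv, hgv⟩ := hg2
  have h1 : monomial v (coeff v x) = (coeff v x) • monomial v 1 := by
    rw [smul_monomial, smul_eq_mul, mul_one]
  rw [h1, map_smul] at hgv
  have hgv2 := MvPolynomial.support_smul hgv
  obtain ⟨hw1, hc1⟩ := (H.sq_monomial (cnt v) v le_rfl).2.2 n g hgv2
  exact ⟨by rw [hw1, hx v hv], v, hv, hc1⟩



open MvPolynomial

variable {k : ℕ}
variable {Sq : ℕ → MvPolynomial (Fin k) (ZMod 2) →ₗ[ZMod 2] MvPolynomial (Fin k) (ZMod 2)}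
variable {w : ℕ → MvPolynomial (Fin k) (ZMod 2)}

/-- the operation on the complement of `w_k`: `Sq^i(w_k x) = w_k · D_i(x)` -/
noncomputable def DD (Sq : ℕ → MvPolynomial (Fin k) (ZMod 2) →ₗ[ZMod 2] MvPolynomial (Fin k) (ZMod 2))
    (w : ℕ → MvPolynomial (Fin k) (ZMod 2)) (i : ℕ) (x : MvPolynomial (Fin k) (ZMod 2)) :
    MvPolynomial (Fin k) (ZMod 2) :=
  ∑ a ∈ Finset.range (i + 1), w a * Sq (i - a) x

/-- `Sq^I(w_k) = w_k · XL I` -/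
noncomputable def XL (Sq : ℕ → MvPolynomial (Fin k) (ZMod 2) →ₗ[ZMod 2] MvPolynomial (Fin k) (ZMod 2))
    (w : ℕ → MvPolynomial (Fin k) (ZMod 2)) (l : List ℕ) : MvPolynomial (Fin k) (ZMod 2) :=
  l.foldr (fun s x => DD Sq w s x) 1

@[simp] lemma XL_nil : XL Sq w [] = 1 := rfl

lemma XL_cons (i : ℕ) (l : List ℕ) : XL Sq w (i :: l) = DD Sq w i (XL Sq w l) := rfl

lemma Good.sq_wk (H : Good k Sq w) (a : ℕ) : Sq a (w k) = w a * w k := by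
  by_cases ha : a ≤ k
  · rw [H.hWu a k ha le_rfl, Finset.sum_eq_single_of_mem 0 (by simp)]
    · simp
    · intro t ht htne
      rw [H.hwTop (k + t) (by omega), mul_zero, smul_zero]
  · rw [H.hInst a k (by omega) le_rfl, H.hwTop a (by omega), zero_mul]

lemma Good.foldSq (H : Good k Sq w) (l : List ℕ) :
    l.foldr (fun s x => Sq s x) (w k) = w k * XL Sq w l := by
  induction l with
  | nil => simp
  | cons i l ih =>
    rw [List.foldr_cons, ih, H.hCartan i (w k) (XL Sq w l), XL_cons, DD, Finset.mul_sum]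
    apply Finset.sum_congr rfl
    intro a _
    rw [H.sq_wk a]
    ring

lemma Good.main (H : Good k Sq w) (hk : 0 < k) : ∀ l : List ℕ, Adm k l →
    ((XL Sq w l).coeff (MI hk l) = 1) ∧ Hom (XL Sq w l) l.sum ∧
    (∀ g ∈ (XL Sq w l).support, g = MI hk l ∨ ltF g (MI hk l)) := by
  classical
  intro l
  induction l with
  | nil =>
    intro _
    refine ⟨by simp, ?_, ?_⟩
    · intro g hg
      simp only [XL_nil] at hg
      rw [mem_support_iff, coeff_one] at hg
      have : g = 0 := by
        by_contra hcon
        simp [Ne.symm hcon] at hg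
      subst this
      simp [wdeg_zero]
    · intro g hg
      simp only [XL_nil] at hg
      rw [mem_support_iff, coeff_one] at hg
      have : g = 0 := by
        by_contra hcon
        simp [Ne.symm hcon] at hg
      subst this
      left
      simp
  | cons i l ih =>
    intro hA
    have hAt : Adm k l := by have := hA.tail; simpa using this
    obtain ⟨ihc, ihh, iho⟩ := ih hAt
    have hde : l.sum ≤ i := by simpa using hA.tail_sum_le
    have he1 : 1 ≤ i - l.sum := hA.one_le_exc (by simp)
    have hek : i - l.sum ≤ k := by have := hA.exc_le; simpa [exc] using this
    set d' := l.sum with hd'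
    set x' := XL Sq w l with hx'
    set M' := MI hk l with hM'
    set e := i - d' with he
    set qe := idx hk e with hqe
    have hqev : (qe : ℕ) = e - 1 := idx_val hk he1 hek
    have hM : MI hk (i :: l) = Finsupp.single qe 1 + 2 • M' := by rw [MI_cons]
    have hXL : XL Sq w (i :: l) = ∑ a ∈ Finset.range (i + 1), w a * Sq (i - a) x' := rfl
    have hMsmall : ∀ q : Fin k, ((Finsupp.single qe 1 + 2 • M' : Fin k →₀ ℕ) q) ≠ 0 → (q : ℕ) + 1 ≤ e := by
      intro q hq
      have h2 := MI_small hk hA q (by rw [hM]; exact hq)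
      have hexc : exc (i :: l) = e := by simp [exc]; rfl
      rwa [hexc] at h2
    have hT1 : ∀ a, a < e → w a * Sq (i - a) x' = 0 := by
      intro a ha
      rw [H.sq_hom_zero ihh (show d' < i - a by omega), mul_zero]
    have hwe : w e = X qe := by
      rw [H.w_eq he1 hek]
      congr 1
      exact Fin.ext (by rw [hqev])
    have hT2 : w e * Sq (i - e) x' =
        ∑ v ∈ x'.support, monomial (Finsupp.single qe 1 + 2 • v) (x'.coeff v) := by
      have hie : i - e = d' := by omega
      rw [hie, H.sq_hom_top ihh, hwe, Finset.mul_sum]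
      apply Finset.sum_congr rfl
      intro v _
      rw [monomial_single_add, pow_one]
    have hT3 : ∀ a, e < a → ∀ g ∈ (w a * Sq (i - a) x').support,
        ltF g (Finsupp.single qe 1 + 2 • M') := by
      intro a ha g hg
      have hga := MvPolynomial.support_mul _ _ hg
      rw [Finset.mem_add] at hga
      obtain ⟨g1, hg1, g2, hg2, rfl⟩ := hga
      obtain ⟨hak, hg1e⟩ := H.wsupp_single (show 1 ≤ a by omega) g1 hg1
      obtain ⟨hwg2, v, hv, hcg2⟩ := H.sq_hom_support ihh (i - a) g2 hg2
      have hcv : cnt v ≤ cnt M' := by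
        rcases iho v hv with rfl | hlt
        · exact le_rfl
        · exact ltF_cnt_le hlt
      have hcntM : cnt (Finsupp.single qe 1 + 2 • M') = 1 + 2 * cnt M' := by
        rw [cnt_add, cnt_single, cnt_smul]
      have hcg : cnt (g1 + g2) ≤ 1 + 2 * cnt M' := by
        rw [cnt_add, hg1e, cnt_single]
        omega
      rcases lt_or_eq_of_le hcg with hlt | heq
      · exact Or.inl (by omega)
      · refine Or.inr ⟨by omega, ?_⟩
        set qa : Fin k := ⟨a - 1, hak⟩ with hqa
        have hga1 : 1 ≤ (g1 + g2) qa := by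
          rw [hg1e]
          simp [Finsupp.single_apply]
        set s : Finset (Fin k) :=
          Finset.univ.filter (fun q => (g1 + g2) q ≠ ((Finsupp.single qe 1 + 2 • M' : Fin k →₀ ℕ) q))
          with hsdef
        have hqas : qa ∈ s := by
          have hMqa : ((Finsupp.single qe 1 + 2 • M' : Fin k →₀ ℕ) qa) = 0 := by
            by_contra hcon
            have h5 := hMsmall qa hcon
            rw [hqa] at h5
            simp at h5
            omega
          simp only [hsdef, Finset.mem_filter, Finset.mem_univ, true_and]
          omega
        have hsne : s.Nonempty := ⟨qa, hqas⟩
        set qm := s.max' hsne with hqm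
        have hqm_mem : qm ∈ s := s.max'_mem hsne
        have hqmge : qa ≤ qm := s.le_max' qa hqas
        have hMqm : ((Finsupp.single qe 1 + 2 • M' : Fin k →₀ ℕ) qm) = 0 := by
          by_contra hcon
          have h5 := hMsmall qm hcon
          have h6 : (qa : ℕ) ≤ (qm : ℕ) := hqmge
          rw [hqa] at h6
          simp at h6
          omega
        have hne : (g1 + g2) qm ≠ ((Finsupp.single qe 1 + 2 • M' : Fin k →₀ ℕ) qm) := by
          simpa [hsdef] using hqm_mem
        refine ⟨qm, by omega, ?_⟩
        intro r hr
        by_contra hcon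
        have hrs : r ∈ s := by
          simp only [hsdef, Finset.mem_filter, Finset.mem_univ, true_and]
          exact hcon
        exact absurd (s.le_max' r hrs) (not_le.mpr hr)
    refine ⟨?_, ?_, ?_⟩
    · -- coefficient of the leading monomial is 1
      rw [hM, hXL, MvPolynomial.coeff_sum]
      rw [Finset.sum_eq_single_of_mem e (by rw [Finset.mem_range]; omega)]
      · rw [hT2, MvPolynomial.coeff_sum]
        rw [Finset.sum_eq_single_of_mem M'
          (mem_support_iff.mpr (by rw [ihc]; exact one_ne_zero))]
        · rw [coeff_monomial, if_pos rfl]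
          exact ihc
        · intro v hv hvne
          rw [coeff_monomial, if_neg]
          intro hcon
          apply hvne
          have h2 : (2 : ℕ) • v = 2 • M' := add_left_cancel hcon
          ext q
          have h3 := DFunLike.congr_fun h2 q
          simp only [Finsupp.smul_apply, smul_eq_mul] at h3
          omega
      · intro a ha hane
        rcases lt_or_gt_of_ne hane with hlt | hgt
        · rw [hT1 a hlt, coeff_zero]
        · by_contra hcon
          have hmem : (Finsupp.single qe 1 + 2 • M') ∈ (w a * Sq (i - a) x').support :=
            mem_support_iff.mpr hcon
          exact ltF_irrefl _ (hT3 a hgt _ hmem)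
    · -- homogeneity
      intro g hg
      rw [hXL] at hg
      obtain ⟨a, ha, hga⟩ := Finset.mem_biUnion.mp (MvPolynomial.support_sum hg)
      rw [Finset.mem_range] at ha
      have hga2 := MvPolynomial.support_mul _ _ hga
      rw [Finset.mem_add] at hga2
      obtain ⟨g1, hg1, g2, hg2, rfl⟩ := hga2
      obtain ⟨hw1, -⟩ := H.wsupp a g1 hg1
      obtain ⟨hw2, -⟩ := H.sq_hom_support ihh (i - a) g2 hg2
      rw [wdeg_add, hw1, hw2, List.sum_cons]
      omega
    · -- order bound
      intro g hg
      rw [hXL] at hg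
      obtain ⟨a, ha, hga⟩ := Finset.mem_biUnion.mp (MvPolynomial.support_sum hg)
      rw [Finset.mem_range] at ha
      rcases lt_trichotomy a e with hlt | rfl | hgt
      · rw [hT1 a hlt] at hga
        simp at hga
      · rw [hT2] at hga
        obtain ⟨v, hv, hgv⟩ := Finset.mem_biUnion.mp (MvPolynomial.support_sum hga)
        rw [support_monomial] at hgv
        have hgeq : g = Finsupp.single qe 1 + 2 • v := by
          by_cases hc : x'.coeff v = 0
          · rw [if_pos hc] at hgv; simp at hgv
          · rw [if_neg hc] at hgv; simpa using hgv
        subst hgeq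
        rcases iho v hv with rfl | hlt
        · left; rw [hM]
        · right; rw [hM]; exact ltF_add_left (ltF_double hlt) _
      · right
        rw [hM]
        exact hT3 a hgt g hga

end PW

theorem peterson_wu_linear_independence {k : ℕ} (hk : 0 < k)
    (Sq : ℕ → MvPolynomial (Fin k) (ZMod 2) →ₗ[ZMod 2] MvPolynomial (Fin k) (ZMod 2))
    (w : ℕ → MvPolynomial (Fin k) (ZMod 2))
    (hw0 : w 0 = 1)
    (hwX : ∀ i : Fin k, w ((i : ℕ) + 1) = MvPolynomial.X i)
    (hwTop : ∀ i, k < i → w i = 0)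
    (hSq0 : ∀ x, Sq 0 x = x)
    (hSqOne : ∀ n, 0 < n → Sq n 1 = 0)
    (hCartan : ∀ n x y, Sq n (x * y) = ∑ i ∈ Finset.range (n + 1), Sq i x * Sq (n - i) y)
    (hWu : ∀ i j, i ≤ j → j ≤ k → Sq i (w j) =
      ∑ t ∈ Finset.range (i + 1),
        (Nat.choose (j + t - i - 1) t : ZMod 2) • (w (i - t) * w (j + t)))
    (hInst : ∀ i j, j < i → j ≤ k → Sq i (w j) = 0) :
    LinearIndependent (ZMod 2)
      (fun I : {l : List ℕ // (∀ x ∈ l, 0 < x) ∧ l.Chain' (fun a b => 2 * b ≤ a) ∧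
          l.headI ≤ k + l.tail.sum} =>
        I.1.foldr (fun s x => Sq s x) (w k)) := by
  classical
  have H : PW.Good k Sq w := ⟨hw0, hwX, hwTop, hSq0, hSqOne, hCartan, hWu, hInst⟩
  have hAdm : ∀ J : {l : List ℕ // (∀ x ∈ l, 0 < x) ∧ l.Chain' (fun a b => 2 * b ≤ a) ∧
      l.headI ≤ k + l.tail.sum}, PW.Adm k J.1 := fun J => J.2
  rw [linearIndependent_iff']
  intro s gc hsum I hIs
  by_contra hgI
  set s' := s.filter (fun J => gc J ≠ 0) with hs'
  have hIs' : I ∈ s' := Finset.mem_filter.mpr ⟨hIs, hgI⟩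
  have hone : ∀ a : ZMod 2, a ≠ 0 → a = 1 := by decide
  have hsum' : ∑ J ∈ s', (J.1.foldr (fun s x => Sq s x) (w k)) = 0 := by
    calc ∑ J ∈ s', (J.1.foldr (fun s x => Sq s x) (w k))
        = ∑ J ∈ s', gc J • (J.1.foldr (fun s x => Sq s x) (w k)) := by
          apply Finset.sum_congr rfl
          intro J hJ
          rw [hone (gc J) (Finset.mem_filter.mp hJ).2, one_smul]
      _ = ∑ J ∈ s, gc J • (J.1.foldr (fun s x => Sq s x) (w k)) := by
          apply Finset.sum_filter_of_ne
          intro J _ hJ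
          intro hc
          apply hJ
          rw [hc, zero_smul]
      _ = 0 := hsum
  have hsum'' : w k * ∑ J ∈ s', PW.XL Sq w J.1 = 0 := by
    rw [Finset.mul_sum]
    rw [← hsum']
    apply Finset.sum_congr rfl
    intro J _
    exact (H.foldSq J.1).symm
  have hwk : w k ≠ 0 := by
    rw [H.w_eq hk le_rfl]
    exact MvPolynomial.X_ne_zero _
  have hXsum : ∑ J ∈ s', PW.XL Sq w J.1 = 0 := by
    rcases mul_eq_zero.mp hsum'' with h | h
    · exact absurd h hwk
    · exact h
  obtain ⟨I0, hI0, hmax⟩ := PW.exists_max s' ⟨I, hIs'⟩ (fun J => PW.MI hk J.1)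
  have h1 := congrArg (MvPolynomial.coeff (PW.MI hk I0.1)) hXsum
  rw [MvPolynomial.coeff_sum, Finset.sum_eq_single_of_mem I0 hI0] at h1
  · rw [(H.main hk I0.1 (hAdm I0)).1] at h1
    rw [MvPolynomial.coeff_zero] at h1
    exact one_ne_zero h1
  · intro J hJ hne
    by_contra hc
    have hmem : PW.MI hk I0.1 ∈ (PW.XL Sq w J.1).support := MvPolynomial.mem_support_iff.mpr hc
    rcases (H.main hk J.1 (hAdm J)).2.2 _ hmem with heq | hlt
    · have h2 : I0.1 = J.1 := PW.MI_inj hk (hAdm I0) (hAdm J) heq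
      exact hne (Subtype.ext h2).symm
    · exact hmax J hJ hlt
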